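/- Let f : ℕ → ℝ≥0 be a concave non-decreasing function. Then for every n ≥ 0 and every p ≥ 1, f(2^n)^p ≤ 2^{p+1} · ∑_{i=2^n+1}^{2^{n+1}} f(i)^p / i. -/

import Mathlib

/-- For a concave non-decreasing `f : ℕ → ℝ≥0` and `p ≥ 1`:
`f(2^n)^p ≤ 2^{p+1} ∑_{i=2^n+1}^{2^{n+1}} f(i)^p / i`. -/
theorem stmt6 (p : ℝ) (hp : 1 ≤ p) (f : ℕ → ℝ) (hf0 : ∀ n, 0 ≤ f n)
    (hmono : Monotone f)
    (hconc : ∀ m n : ℕ, m ≤ n → f (n + m) - f n ≤ f n - f (n - m)) :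
    ∀ n : ℕ, f (2 ^ n) ^ p ≤
      2 ^ (p + 1) * ∑ i ∈ Finset.Ioc (2 ^ n) (2 ^ (n + 1)), f i ^ p / (i : ℝ) := by
  intro n
  have key : (f (2 ^ n) ^ p) / 2 ≤
      ∑ i ∈ Finset.Ioc (2 ^ n) (2 ^ (n + 1)), f i ^ p / (i : ℝ) := by
    have hcard : (Finset.Ioc (2 ^ n) (2 ^ (n + 1))).card = 2 ^ n := by
      rw [Nat.card_Ioc, pow_succ]; omega
    calc f (2 ^ n) ^ p / 2
        = (2 : ℝ) ^ n * (f (2 ^ n) ^ p / 2 ^ (n + 1)) := by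
          rw [pow_succ]
          have : (2 : ℝ) ^ n ≠ 0 := by positivity
          field_simp
      _ = ∑ _i ∈ Finset.Ioc (2 ^ n) (2 ^ (n + 1)), f (2 ^ n) ^ p / 2 ^ (n + 1) := by
          rw [Finset.sum_const, hcard, nsmul_eq_mul]
          push_cast
          ring
      _ ≤ _ := by
          refine Finset.sum_le_sum fun i hi => ?_
          obtain ⟨h1, h2⟩ := Finset.mem_Ioc.mp hi
          have hi0 : (0 : ℝ) < i := by exact_mod_cast Nat.pos_of_ne_zero (by omega)
          apply div_le_div₀ (Real.rpow_nonneg (hf0 _) _) ?_ hi0 ?_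
          · exact Real.rpow_le_rpow (hf0 _) (hmono h1.le) (le_trans zero_le_one hp)
          · exact_mod_cast h2
  have hpow : (1 : ℝ) ≤ 2 ^ p := Real.one_le_rpow one_le_two (le_trans zero_le_one hp)
  calc f (2 ^ n) ^ p ≤ 2 ^ p * f (2 ^ n) ^ p := le_mul_of_one_le_left (Real.rpow_nonneg (hf0 _) _) hpow
    _ = 2 ^ (p + 1) * (f (2 ^ n) ^ p / 2) := by
        rw [Real.rpow_add (by norm_num), Real.rpow_one]; ring
    _ ≤ _ := mul_le_mul_of_nonneg_left key (by positivity)
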